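/- No C₃*-critical signed graph contains a cut-edge. -/

import Mathlib

/-- A signed graph: a vertex type with a symmetric positive-edge relation and a
symmetric negative-edge relation (loops and "digons" are allowed). -/
structure SignedGraph (V : Type*) where
  pos : V → V → Prop
  neg : V → V → Prop
  pos_symm : Symmetric pos
  neg_symm : Symmetric neg

namespace SignedGraph

variable {V W : Type*}

/-- Switching at the vertex set `{v | s v = true}`: signs of edges with exactly one
endpoint in the set are flipped; loops and edges with both or no endpoints in the
set are unchanged. -/
def switch (G : SignedGraph V) (s : V → Bool) : SignedGraph V where
  pos u v := if s u = s v then G.pos u v else G.neg u v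
  neg u v := if s u = s v then G.neg u v else G.pos u v
  pos_symm := by
    intro u v h
    by_cases hs : s u = s v
    · rw [if_pos hs] at h; rw [if_pos hs.symm]; exact G.pos_symm h
    · rw [if_neg hs] at h; rw [if_neg (fun e => hs e.symm)]; exact G.neg_symm h
  neg_symm := by
    intro u v h
    by_cases hs : s u = s v
    · rw [if_pos hs] at h; rw [if_pos hs.symm]; exact G.neg_symm h
    · rw [if_neg hs] at h; rw [if_neg (fun e => hs e.symm)]; exact G.pos_symm h

/-- An edge-sign preserving homomorphism maps positive edges to positive edges and
negative edges to negative edges. -/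
def IsESPHom (G : SignedGraph V) (H : SignedGraph W) (φ : V → W) : Prop :=
  (∀ u v, G.pos u v → H.pos (φ u) (φ v)) ∧ (∀ u v, G.neg u v → H.neg (φ u) (φ v))

/-- A signed graph admits a homomorphism to another iff some switching of it admits
an edge-sign preserving homomorphism (this preserves adjacency and signs of closed
walks). -/
def HasHomTo (G : SignedGraph V) (H : SignedGraph W) : Prop :=
  ∃ (s : V → Bool) (φ : V → W), IsESPHom (G.switch s) H φ

/-- `H` is a subgraph of `G` (on the same vertex set). -/
def IsSubgraph (H G : SignedGraph V) : Prop :=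
  (∀ u v, H.pos u v → G.pos u v) ∧ (∀ u v, H.neg u v → G.neg u v)

/-- The number of edges of a finite signed graph (unordered pairs, each sign
counted separately). -/
noncomputable def edgeCount (G : SignedGraph V) : ℕ :=
  (Sym2.fromRel (⟨fun _ _ h => G.pos_symm h⟩ : Std.Symm G.pos)).ncard +
    (Sym2.fromRel (⟨fun _ _ h => G.neg_symm h⟩ : Std.Symm G.neg)).ncard

/-- The degree of a vertex: the number of its neighbours (via an edge of either sign). -/
noncomputable def degree (G : SignedGraph V) (v : V) : ℕ :=
  {u | G.pos v u ∨ G.neg v u}.ncard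

/-- The underlying simple graph of a signed graph (loops discarded). -/
def underlying (G : SignedGraph V) : SimpleGraph V :=
  SimpleGraph.fromRel (fun u v => G.pos u v ∨ G.neg u v)

end SignedGraph

/-- `C₃*`: the all-positive triangle with a negative loop at each vertex. -/
def C3star : SignedGraph (Fin 3) where
  pos u v := u ≠ v
  neg u v := u = v
  pos_symm := fun _ _ h => h.symm
  neg_symm := fun _ _ h => h.symm

/-- A signed graph is `C₃*`-critical: it has no digon and no positive loop (the
girth conditions of Definition 2.7), admits no homomorphism to `C₃*`, but every
proper subgraph does. -/
def IsC3Critical {V : Type*} (G : SignedGraph V) : Prop :=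
  (∀ u v, ¬ (G.pos u v ∧ G.neg u v)) ∧
  (∀ v, ¬ G.pos v v) ∧
  ¬ G.HasHomTo C3star ∧
  ∀ H : SignedGraph V, H.IsSubgraph G → H ≠ G → H.HasHomTo C3star

/-- Deleting the (unordered) edge `ab` from a signed graph (both signs removed). -/
def SignedGraph.deleteEdge {V : Type*} (G : SignedGraph V) (a b : V) : SignedGraph V where
  pos u v := G.pos u v ∧ ¬ ((u = a ∧ v = b) ∨ (u = b ∧ v = a))
  neg u v := G.neg u v ∧ ¬ ((u = a ∧ v = b) ∨ (u = b ∧ v = a))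
  pos_symm := by
    intro u v h
    exact ⟨G.pos_symm h.1, fun hc => h.2 (by tauto)⟩
  neg_symm := by
    intro u v h
    exact ⟨G.neg_symm h.1, fun hc => h.2 (by tauto)⟩

/-- No `C₃*`-critical signed graph contains a cut-edge: for every edge `ab` of a
`C₃*`-critical signed graph, the endpoints `a` and `b` are still joined by a walk
after deleting the edge `ab`. -/
private lemma xor_cancel_iff' (x y c : Bool) : (xor x c = xor y c) ↔ x = y := by
  cases x <;> cases y <;> cases c <;> simp

theorem c3critical_no_cut_edge {V : Type*} (G : SignedGraph V)
    (hcrit : IsC3Critical G) (a b : V) (hab : G.pos a b ∨ G.neg a b) :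
    Relation.ReflTransGen
      (fun u v => (G.deleteEdge a b).pos u v ∨ (G.deleteEdge a b).neg u v) a b := by
  classical
  obtain ⟨hnd, hnl, hnohom, hsub⟩ := hcrit
  by_contra hcon
  set H := G.deleteEdge a b with hHdef
  have hsymm : Symmetric (fun u v => H.pos u v ∨ H.neg u v) := fun u v h =>
    h.elim (fun h => Or.inl (H.pos_symm h)) (fun h => Or.inr (H.neg_symm h))
  set inC : V → Prop := fun v => Relation.ReflTransGen (fun u v => H.pos u v ∨ H.neg u v) b v
    with hinC
  have hbC : inC b := Relation.ReflTransGen.refl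
  have haC : ¬ inC a := fun h => hcon (by
    haveI : Std.Symm (fun u v => H.pos u v ∨ H.neg u v) := ⟨hsymm⟩
    exact Relation.ReflTransGen.stdSymm.symm _ _ h)
  have hclosed : ∀ u v, inC u → (H.pos u v ∨ H.neg u v) → inC v := fun u v hu h =>
    Relation.ReflTransGen.tail hu h
  have hHne : H ≠ G := by
    intro hEq
    rcases hab with hp | hn
    · have h1 : H.pos a b := by rw [hEq]; exact hp
      exact h1.2 (Or.inl ⟨rfl, rfl⟩)
    · have h1 : H.neg a b := by rw [hEq]; exact hn
      exact h1.2 (Or.inl ⟨rfl, rfl⟩)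
  obtain ⟨s, φ, hφp, hφn⟩ := hsub H ⟨fun u v h => h.1, fun u v h => h.1⟩ hHne
  have hcross : ∀ u v, inC u → ¬ inC v → (G.pos u v ∨ G.neg u v) → u = b ∧ v = a := by
    intro u v hu hv he
    by_cases hpair : (u = a ∧ v = b) ∨ (u = b ∧ v = a)
    · rcases hpair with ⟨h1, h2⟩ | ⟨h1, h2⟩
      · exact absurd (h1 ▸ hu) haC
      · exact ⟨h1, h2⟩
    · exact absurd (hclosed u v hu (he.imp (fun h => ⟨h, hpair⟩) (fun h => ⟨h, hpair⟩))) hv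
  set t : Fin 3 := if G.pos a b then φ a + 1 else φ a with htdef
  have hta : G.pos a b → t ≠ φ a := by
    intro hp
    simp only [htdef, if_pos hp]
    exact (by decide : ∀ x : Fin 3, x + 1 ≠ x) (φ a)
  have htb : G.neg a b → t = φ a := by
    intro hn
    have hnp : ¬ G.pos a b := fun hp => hnd a b ⟨hp, hn⟩
    simp [htdef, hnp]
  set σ := Equiv.swap (φ b) t with hσ
  set c : Bool := xor (s a) (s b) with hc
  set s' : V → Bool := fun v => if inC v then xor (s v) c else s v with hs'
  set φ' : V → Fin 3 := fun v => if inC v then σ (φ v) else φ v with hφ'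
  have hs'b : s' b = s a := by
    simp only [hs', if_pos hbC, hc]
    cases s a <;> cases s b <;> rfl
  have hs'a : s' a = s a := by simp only [hs', if_neg haC]
  have hσb : σ (φ b) = t := Equiv.swap_apply_left _ _
  -- helper: lift an internal edge through the hom
  have hpair_bothC : ∀ u v, inC u → inC v → ¬ ((u = a ∧ v = b) ∨ (u = b ∧ v = a)) := by
    rintro u v hu hv (⟨h1, _⟩ | ⟨_, h2⟩)
    · exact haC (h1 ▸ hu)
    · exact haC (h2 ▸ hv)
  have hpair_bothN : ∀ u v, ¬ inC u → ¬ inC v → ¬ ((u = a ∧ v = b) ∨ (u = b ∧ v = a)) := by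
    rintro u v hu hv (⟨_, h2⟩ | ⟨h1, _⟩)
    · exact hv (h2 ▸ hbC)
    · exact hu (h1 ▸ hbC)
  apply hnohom
  refine ⟨s', φ', ?_, ?_⟩
  · -- positive edges
    intro u v h
    have h' : if s' u = s' v then G.pos u v else G.neg u v := h
    by_cases hu : inC u <;> by_cases hv : inC v
    · -- both in C
      have hiff : (s' u = s' v) ↔ (s u = s v) := by
        simp only [hs', if_pos hu, if_pos hv]; exact xor_cancel_iff' _ _ _
      have hnp := hpair_bothC u v hu hv
      have hedge : if s u = s v then H.pos u v else H.neg u v := by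
        by_cases hsu : s u = s v
        · rw [if_pos hsu]; rw [if_pos (hiff.mpr hsu)] at h'; exact ⟨h', hnp⟩
        · rw [if_neg hsu]; rw [if_neg (fun e => hsu (hiff.mp e))] at h'; exact ⟨h', hnp⟩
      have := hφp u v hedge
      show φ' u ≠ φ' v
      simp only [hφ', if_pos hu, if_pos hv]
      exact σ.injective.ne this
    · -- u in C, v not
      have hedge : G.pos u v ∨ G.neg u v := by
        by_cases hsu : s' u = s' v
        · rw [if_pos hsu] at h'; exact Or.inl h'
        · rw [if_neg hsu] at h'; exact Or.inr h'
      obtain ⟨hub, hva⟩ := hcross u v hu hv hedge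
      rw [hub, hva] at h'
      have hss : s' b = s' a := by rw [hs'b, hs'a]
      rw [if_pos hss] at h'
      have hpab : G.pos a b := G.pos_symm h'
      show φ' u ≠ φ' v
      rw [hub, hva]
      simp only [hφ', if_pos hbC, if_neg haC, hσb]
      exact hta hpab
    · -- v in C, u not
      have hedge : G.pos v u ∨ G.neg v u := by
        by_cases hsu : s' u = s' v
        · rw [if_pos hsu] at h'; exact Or.inl (G.pos_symm h')
        · rw [if_neg hsu] at h'; exact Or.inr (G.neg_symm h')
      obtain ⟨hub, hva⟩ := hcross v u hv hu hedge
      rw [hva, hub] at h'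
      have hss : s' a = s' b := by rw [hs'b, hs'a]
      rw [if_pos hss] at h'
      show φ' u ≠ φ' v
      rw [hva, hub]
      simp only [hφ', if_pos hbC, if_neg haC, hσb]
      exact (hta h').symm
    · -- both not in C
      have hss : (s' u = s' v) ↔ (s u = s v) := by
        simp only [hs', if_neg hu, if_neg hv]
      have hnp := hpair_bothN u v hu hv
      have hedge : if s u = s v then H.pos u v else H.neg u v := by
        by_cases hsu : s u = s v
        · rw [if_pos hsu]; rw [if_pos (hss.mpr hsu)] at h'; exact ⟨h', hnp⟩
        · rw [if_neg hsu]; rw [if_neg (fun e => hsu (hss.mp e))] at h'; exact ⟨h', hnp⟩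
      have := hφp u v hedge
      show φ' u ≠ φ' v
      simp only [hφ', if_neg hu, if_neg hv]
      exact this
  · -- negative edges
    intro u v h
    have h' : if s' u = s' v then G.neg u v else G.pos u v := h
    by_cases hu : inC u <;> by_cases hv : inC v
    · have hiff : (s' u = s' v) ↔ (s u = s v) := by
        simp only [hs', if_pos hu, if_pos hv]; exact xor_cancel_iff' _ _ _
      have hnp := hpair_bothC u v hu hv
      have hedge : if s u = s v then H.neg u v else H.pos u v := by
        by_cases hsu : s u = s v
        · rw [if_pos hsu]; rw [if_pos (hiff.mpr hsu)] at h'; exact ⟨h', hnp⟩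
        · rw [if_neg hsu]; rw [if_neg (fun e => hsu (hiff.mp e))] at h'; exact ⟨h', hnp⟩
      have := hφn u v hedge
      show φ' u = φ' v
      simp only [hφ', if_pos hu, if_pos hv]
      exact congrArg σ this
    · have hedge : G.pos u v ∨ G.neg u v := by
        by_cases hsu : s' u = s' v
        · rw [if_pos hsu] at h'; exact Or.inr h'
        · rw [if_neg hsu] at h'; exact Or.inl h'
      obtain ⟨hub, hva⟩ := hcross u v hu hv hedge
      rw [hub, hva] at h'
      have hss : s' b = s' a := by rw [hs'b, hs'a]
      rw [if_pos hss] at h'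
      have hnab : G.neg a b := G.neg_symm h'
      show φ' u = φ' v
      rw [hub, hva]
      simp only [hφ', if_pos hbC, if_neg haC, hσb]
      exact htb hnab
    · have hedge : G.pos v u ∨ G.neg v u := by
        by_cases hsu : s' u = s' v
        · rw [if_pos hsu] at h'; exact Or.inr (G.neg_symm h')
        · rw [if_neg hsu] at h'; exact Or.inl (G.pos_symm h')
      obtain ⟨hub, hva⟩ := hcross v u hv hu hedge
      rw [hva, hub] at h'
      have hss : s' a = s' b := by rw [hs'b, hs'a]
      rw [if_pos hss] at h'
      show φ' u = φ' v
      rw [hva, hub]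
      simp only [hφ', if_pos hbC, if_neg haC, hσb]
      exact (htb h').symm
    · have hss : (s' u = s' v) ↔ (s u = s v) := by
        simp only [hs', if_neg hu, if_neg hv]
      have hnp := hpair_bothN u v hu hv
      have hedge : if s u = s v then H.neg u v else H.pos u v := by
        by_cases hsu : s u = s v
        · rw [if_pos hsu]; rw [if_pos (hss.mpr hsu)] at h'; exact ⟨h', hnp⟩
        · rw [if_neg hsu]; rw [if_neg (fun e => hsu (hss.mp e))] at h'; exact ⟨h', hnp⟩
      have := hφn u v hedge
      show φ' u = φ' v
      simp only [hφ', if_neg hu, if_neg hv]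
      exact this
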